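/- Suppose V, W, D ∈ A with [V,W] = 0 and [D,W] = λW. Then B(n,λ,V+W,D) = B(n,λ,V,D), where B(n,λ,U,D) = Σ_{k=0}^{n} C(n,k) (∏_{j=0}^{k-1}(D - U + jλI)) U^{n-k} with products ordered left to right in increasing j. -/

import Mathlib

open Finset

section aux
variable {K A : Type*} [Field K] [Ring A] [Algebra K A]

lemma powE (l : K) (E W : A) (h : E * W - W * E = l • W) (m : ℕ) (x : K) :
    W ^ m * (E + x • (1:A)) = (E + (x - m * l) • (1:A)) * W ^ m := by
  induction m generalizing x with
  | zero => simp
  | succ m ih =>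
    have hWE : W * E = E * W - l • W := by rw [← h]; exact (sub_sub_cancel _ _).symm
    have hW : ∀ y : K, W * (E + y • (1:A)) = (E + (y - l) • (1:A)) * W := by
      intro y
      rw [mul_add, hWE, add_mul, sub_smul, sub_mul, mul_smul_comm, mul_one,
        smul_mul_assoc, smul_mul_assoc, one_mul]
      abel
    calc W ^ (m+1) * (E + x • (1:A)) = W ^ m * (W * (E + x • (1:A))) := by
          rw [pow_succ, mul_assoc]
      _ = W ^ m * (E + (x - l) • (1:A)) * W := by rw [hW, mul_assoc]
      _ = (E + (x - l - m * l) • (1:A)) * W ^ m * W := by rw [ih]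
      _ = (E + (x - (m+1 : ℕ) * l) • (1:A)) * W ^ (m+1) := by
          rw [pow_succ, mul_assoc]
          congr 3
          push_cast
          ring

lemma keyB' (l : K) (E W : A) (h : E * W - W * E = l • W) (f g : ℕ → A)
    (hf0 : f 0 = 1) (hg0 : g 0 = 1)
    (hfs : ∀ k : ℕ, f (k+1) = f k * (E - W + ((k : K) * l) • (1:A)))
    (hgs : ∀ c : ℕ, g (c+1) = g c * (E + ((c : K) * l) • (1:A))) :
    ∀ c : ℕ, ∑ k ∈ range (c+1), c.choose k • (f k * W ^ (c - k)) = g c := by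
  intro c
  induction c with
  | zero => simp [hf0, hg0]
  | succ c ih =>
    have step1 : ∑ k ∈ range (c+2), (c+1).choose k • (f k * W ^ (c + 1 - k))
        = (∑ k ∈ range (c+1), c.choose k • (f (k+1) * W ^ (c + 1 - (k+1))))
          + ∑ k ∈ range (c+2), c.choose k • (f k * W ^ (c + 1 - k)) := by
      rw [Finset.sum_range_succ' (fun k => (c+1).choose k • (f k * W ^ (c + 1 - k))) (c+1)]
      rw [Finset.sum_range_succ' (fun k => c.choose k • (f k * W ^ (c + 1 - k))) (c+1)]
      simp only [Nat.choose_succ_succ, add_smul, Nat.choose_zero_right,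
        Finset.sum_add_distrib]
      abel
    have step2 : ∑ k ∈ range (c+2), c.choose k • (f k * W ^ (c + 1 - k))
        = ∑ k ∈ range (c+1), c.choose k • (f k * W ^ (c + 1 - k)) := by
      rw [Finset.sum_range_succ, Nat.choose_succ_self, zero_smul, add_zero]
    have step3 : ∑ k ∈ range (c+1), c.choose k • (f k * W ^ (c + 1 - k)) = g c * W := by
      rw [← ih, Finset.sum_mul]
      refine Finset.sum_congr rfl fun k hk => ?_
      rw [Finset.mem_range] at hk
      have : c + 1 - k = (c - k) + 1 := by omega
      rw [smul_mul_assoc, this, pow_succ, ← mul_assoc]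
    have step4 : ∀ k ∈ range (c+1), c.choose k • (f (k+1) * W ^ (c + 1 - (k+1)))
        = c.choose k • (f k * W ^ (c - k) * (E + ((c:K) * l) • (1:A)))
          - c.choose k • (f k * W ^ (c + 1 - k)) := by
      intro k hk
      rw [Finset.mem_range] at hk
      have hck : c + 1 - (k+1) = c - k := by omega
      have hck2 : c + 1 - k = (c - k) + 1 := by omega
      have hcast : ((c:K) * l - ((c - k : ℕ) : K) * l) = (k : K) * l := by
        rw [Nat.cast_sub (by omega : k ≤ c)]; ring
      have hcomm : W ^ (c - k) * (E + ((c:K) * l) • (1:A))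
          = (E + ((k:K) * l) • (1:A)) * W ^ (c - k) := by
        rw [powE l E W h (c - k) ((c:K) * l), hcast]
      rw [hck, hck2, hfs, mul_assoc _ _ (E + ((c:K) * l) • (1:A)), hcomm, ← smul_sub]
      congr 1
      have hsplit : E - W + ((k:K) * l) • (1:A) = (E + ((k:K) * l) • (1:A)) - W := by abel
      rw [hsplit, mul_assoc, sub_mul, mul_sub, ← pow_succ']
    calc ∑ k ∈ range (c+1+1), (c+1).choose k • (f k * W ^ (c + 1 - k))
        = (∑ k ∈ range (c+1), c.choose k • (f (k+1) * W ^ (c + 1 - (k+1))))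
          + ∑ k ∈ range (c+2), c.choose k • (f k * W ^ (c + 1 - k)) := step1
      _ = (∑ k ∈ range (c+1), (c.choose k • (f k * W ^ (c - k) * (E + ((c:K) * l) • (1:A)))
            - c.choose k • (f k * W ^ (c + 1 - k))))
          + ∑ k ∈ range (c+1), c.choose k • (f k * W ^ (c + 1 - k)) := by
          rw [step2, Finset.sum_congr rfl step4]
      _ = ∑ k ∈ range (c+1), c.choose k • (f k * W ^ (c - k) * (E + ((c:K) * l) • (1:A))) := by
          rw [Finset.sum_sub_distrib]; abel
      _ = (∑ k ∈ range (c+1), c.choose k • (f k * W ^ (c - k))) * (E + ((c:K) * l) • (1:A)) := by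
          rw [Finset.sum_mul]
          exact Finset.sum_congr rfl fun k _ => (smul_mul_assoc _ _ _).symm
      _ = g (c+1) := by rw [ih, hgs]


end aux

noncomputable def binomB {K A : Type*} [Field K] [Ring A] [Algebra K A]
    (n : ℕ) (l : K) (U D : A) : A :=
  ∑ k ∈ Finset.range (n + 1),
    n.choose k •
      (((List.range k).map (fun j : ℕ => D - U + ((j : K) * l) • (1 : A))).prod * U ^ (n - k))

theorem binomB_add_right_invariant
    {K A : Type*} [Field K] [CharZero K] [Ring A] [Algebra K A]
    (l : K) (V W D : A) (hVW : V * W - W * V = 0)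
    (hDW : D * W - W * D = l • W) (n : ℕ) :
    binomB n l (V + W) D = binomB n l V D := by
  have hComm : Commute V W := sub_eq_zero.mp hVW
  have hEW : (D - V) * W - W * (D - V) = l • W := by
    have h1 : (D - V) * W - W * (D - V) = (D * W - W * D) - (V * W - W * V) := by
      noncomm_ring
    rw [h1, hDW, hVW, sub_zero]
  -- notation
  set F : ℕ → A := fun k =>
    ((List.range k).map (fun j : ℕ => (D - V) - W + ((j : K) * l) • (1:A))).prod with hF
  set G : ℕ → A := fun k =>
    ((List.range k).map (fun j : ℕ => (D - V) + ((j : K) * l) • (1:A))).prod with hG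
  have hkey : ∀ c : ℕ, ∑ k ∈ range (c+1), c.choose k • (F k * W ^ (c - k)) = G c := by
    refine keyB' l (D - V) W hEW F G (by simp [hF]) (by simp [hG]) ?_ ?_
    · intro k; simp [hF, List.range_succ]
    · intro c; simp [hG, List.range_succ]
  have hD : ∀ j : ℕ, D - (V + W) + ((j : K) * l) • (1:A)
      = (D - V) - W + ((j : K) * l) • (1:A) := by
    intro j; rw [sub_add_eq_sub_sub]
  have hRHS : binomB n l V D = ∑ c ∈ range (n+1), n.choose c • (G c * V ^ (n - c)) := rfl
  have hLHS : binomB n l (V + W) D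
      = ∑ k ∈ range (n+1), n.choose k • (F k * (V + W) ^ (n - k)) := by
    unfold binomB
    refine Finset.sum_congr rfl fun k _ => ?_
    simp only [hD, hF]
  rw [hLHS, hRHS]
  -- expand (V + W) ^ (n - k)
  have hexp : ∀ k ∈ range (n+1),
      n.choose k • (F k * (V + W) ^ (n - k))
      = ∑ m ∈ range (n - k + 1),
          (n.choose k * (n - k).choose m) • (F k * W ^ (n - k - m) * V ^ m) := by
    intro k _
    rw [hComm.add_pow, Finset.mul_sum, Finset.smul_sum]
    refine Finset.sum_congr rfl fun m _ => ?_
    have h1 : V ^ m * W ^ (n - k - m) * ((n - k).choose m : A)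
        = (n - k).choose m • (W ^ (n - k - m) * V ^ m) := by
      rw [← nsmul_eq_mul', (hComm.pow_pow m (n - k - m)).eq]
    rw [h1, mul_smul_comm, smul_smul, mul_assoc]
  rw [Finset.sum_congr rfl hexp]
  -- reindex the double sum
  rw [Finset.sum_sigma']
  have hT : ∑ c ∈ range (n+1), n.choose c • (G c * V ^ (n - c))
      = ∑ p ∈ (range (n+1)).sigma (fun c => range (c+1)),
          (n.choose p.2 * (n - p.2).choose (p.1 - p.2)) •
            (F p.2 * W ^ (p.1 - p.2) * V ^ (n - p.1)) := by
    have hinner : ∀ c ∈ range (n+1), n.choose c • (G c * V ^ (n - c))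
        = ∑ k ∈ range (c+1),
            (n.choose k * (n - k).choose (c - k)) • (F k * W ^ (c - k) * V ^ (n - c)) := by
      intro c hc
      rw [Finset.mem_range] at hc
      rw [← hkey c, Finset.sum_mul, Finset.smul_sum]
      refine Finset.sum_congr rfl fun k hk => ?_
      rw [Finset.mem_range] at hk
      rw [smul_mul_assoc, ← mul_smul,
        Nat.choose_mul (by omega : k ≤ c)]
    rw [Finset.sum_congr rfl hinner, Finset.sum_sigma']
  rw [hT]
  refine Finset.sum_nbij' (fun p => ⟨n - p.2, p.1⟩) (fun p => ⟨p.2, n - p.1⟩) ?_ ?_ ?_ ?_ ?_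
  · rintro ⟨k, m⟩ hp
    simp only [Finset.mem_sigma, Finset.mem_range] at hp ⊢
    omega
  · rintro ⟨c, k⟩ hp
    simp only [Finset.mem_sigma, Finset.mem_range] at hp ⊢
    omega
  · rintro ⟨k, m⟩ hp
    simp only [Finset.mem_sigma, Finset.mem_range] at hp
    simp only [Sigma.mk.inj_iff, heq_eq_eq]
    exact ⟨trivial, by omega⟩
  · rintro ⟨c, k⟩ hp
    simp only [Finset.mem_sigma, Finset.mem_range] at hp
    simp only [Sigma.mk.inj_iff, heq_eq_eq]
    exact ⟨by omega, trivial⟩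
  · rintro ⟨k, m⟩ hp
    simp only [Finset.mem_sigma, Finset.mem_range] at hp
    have h1 : n - m - k = n - k - m := by omega
    have h2 : n - (n - m) = m := by omega
    simp only [h1, h2]
    rw [Nat.choose_symm (by omega : m ≤ n - k)]
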